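/- For every integer n ≥ 1 and real r > 0, the Whitney sphere parameterization W restricted to S^n_r is a Lagrangian immersion: for every x ∈ S^n_r and all v, w ∈ ℝ^{n+1} with ⟨x, v⟩ = ⟨x, w⟩ = 0, one has ω(DW_x v, DW_x w) = 0 for the standard symplectic form ω on ℂ^n, and the restriction of DW_x to {v ∈ ℝ^{n+1} : ⟨x, v⟩ = 0} is injective. -/

import Mathlib

open scoped BigOperators RealInnerProductSpace

/-- Standard symplectic form on `ℂ^N`: `ω(u, v) = Im (∑ conj (u j) * v j)`. -/
noncomputable def stdSymp (N : ℕ) (u v : Fin N → ℂ) : ℝ :=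
  (∑ j, (starRingEnd ℂ) (u j) * v j).im

/-- The Whitney sphere parameterization `W : ℝ^{n+1} → ℂ^n`,
`W(x)_j = x_j + 2i·x_0·x_j` for `1 ≤ j ≤ n`. -/
noncomputable def whitney (n : ℕ) (x : EuclideanSpace ℝ (Fin (n + 1))) : Fin n → ℂ :=
  fun j => (x j.succ : ℂ) + 2 * Complex.I * (x 0 : ℂ) * (x j.succ : ℂ)

lemma whitney_hasFDerivAt (n : ℕ) (x : EuclideanSpace ℝ (Fin (n+1))) (j : Fin n) :
    HasFDerivAt (fun y : EuclideanSpace ℝ (Fin (n+1)) => whitney n y j)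
      (Complex.ofRealCLM.comp (EuclideanSpace.proj j.succ) +
        (2*Complex.I) • ((x 0 : ℂ) • (Complex.ofRealCLM.comp (EuclideanSpace.proj j.succ)) +
          (x j.succ : ℂ) • (Complex.ofRealCLM.comp (EuclideanSpace.proj (0 : Fin (n+1)))))) x := by
  have hg : ∀ i : Fin (n+1), HasFDerivAt (fun y : EuclideanSpace ℝ (Fin (n+1)) => ((y i : ℝ) : ℂ))
      (Complex.ofRealCLM.comp (EuclideanSpace.proj i)) x :=
    fun i => by
      have h1 := (EuclideanSpace.proj (𝕜 := ℝ) i).hasFDerivAt (x := x)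
      exact Complex.ofRealCLM.hasFDerivAt.comp x h1
  have h := (hg j.succ).add (((hg 0).mul (hg j.succ)).const_mul (2*Complex.I))
  have heq : (fun y : EuclideanSpace ℝ (Fin (n+1)) => whitney n y j)
      = fun y => ((y j.succ : ℝ) : ℂ) + 2*Complex.I * (((y 0 : ℝ):ℂ) * ((y j.succ : ℝ):ℂ)) := by
    funext y; simp [whitney]; ring
  rw [heq]; exact h

lemma fderiv_whitney_apply (n : ℕ) (x v : EuclideanSpace ℝ (Fin (n+1))) (j : Fin n) :
    fderiv ℝ (whitney n) x v j
      = (v j.succ : ℂ) + 2*Complex.I*((x 0 : ℂ)*(v j.succ : ℂ) + (x j.succ : ℂ)*(v 0 : ℂ)) := by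
  have hdiff : ∀ j : Fin n, DifferentiableAt ℝ (fun y => whitney n y j) x :=
    fun j => (whitney_hasFDerivAt n x j).differentiableAt
  have hpi : fderiv ℝ (whitney n) x
      = ContinuousLinearMap.pi fun j => fderiv ℝ (fun y => whitney n y j) x := fderiv_pi hdiff
  rw [hpi]
  rw [ContinuousLinearMap.pi_apply, (whitney_hasFDerivAt n x j).fderiv]
  simp [PiLp.proj_apply]
  ring

/-- The Whitney sphere parameterization restricted to the sphere `S^n_r` is a Lagrangian
immersion: on tangent vectors to the sphere its derivative is isotropic for the standard
symplectic form on `ℂ^n` and injective. -/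
theorem stmt6 (n : ℕ) (hn : 1 ≤ n) (r : ℝ) (hr : 0 < r)
    (x : EuclideanSpace ℝ (Fin (n + 1))) (hx : ‖x‖ = r) :
    (∀ v w : EuclideanSpace ℝ (Fin (n + 1)), ⟪x, v⟫ = 0 → ⟪x, w⟫ = 0 →
      stdSymp n (fderiv ℝ (whitney n) x v) (fderiv ℝ (whitney n) x w) = 0) ∧
    Set.InjOn (fderiv ℝ (whitney n) x) {v | ⟪x, v⟫ = 0} := by
  have hinner : ∀ v : EuclideanSpace ℝ (Fin (n+1)), ⟪x, v⟫ = 0 →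
      ∑ j : Fin n, x j.succ * v j.succ = -(x 0 * v 0) := by
    intro v hv
    have h : ∑ i : Fin (n+1), x i * v i = 0 := by
      simpa [PiLp.inner_apply, RCLike.inner_apply, conj_trivial, mul_comm] using hv
    rw [Fin.sum_univ_succ] at h
    linarith
  constructor
  · intro v w hv hw
    unfold stdSymp
    rw [Complex.im_sum]
    have hterm : ∀ j : Fin n,
        ((starRingEnd ℂ) (fderiv ℝ (whitney n) x v j) * fderiv ℝ (whitney n) x w j).im
          = 2 * (x j.succ * (v j.succ * w 0 - v 0 * w j.succ)) := by
      intro j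
      rw [fderiv_whitney_apply, fderiv_whitney_apply]
      simp [Complex.mul_im, Complex.mul_re, Complex.add_im, Complex.add_re,
        Complex.conj_re, Complex.conj_im, Complex.I_re, Complex.I_im,
        Complex.ofReal_re, Complex.ofReal_im]
      ring
    rw [Finset.sum_congr rfl fun j _ => hterm j]
    have hs : ∑ j : Fin n, 2 * (x j.succ * (v j.succ * w 0 - v 0 * w j.succ))
        = 2 * w 0 * (∑ j : Fin n, x j.succ * v j.succ)
          - 2 * v 0 * (∑ j : Fin n, x j.succ * w j.succ) := by
      rw [Finset.mul_sum, Finset.mul_sum, ← Finset.sum_sub_distrib]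
      exact Finset.sum_congr rfl fun j _ => by ring
    rw [hs, hinner v hv, hinner w hw]; ring
  · intro v hv w hw h
    simp only [Set.mem_setOf_eq] at hv hw
    have hcomp : ∀ j : Fin n, v j.succ = w j.succ ∧ x j.succ * v 0 = x j.succ * w 0 := by
      intro j
      have hj := congrFun h j
      rw [fderiv_whitney_apply, fderiv_whitney_apply] at hj
      have hre := congrArg Complex.re hj
      have him := congrArg Complex.im hj
      simp [Complex.mul_im, Complex.mul_re, Complex.add_im, Complex.add_re,
        Complex.I_re, Complex.I_im, Complex.ofReal_re, Complex.ofReal_im] at hre him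
      refine ⟨hre, ?_⟩
      rw [hre] at him
      linarith
    have hvs : ∀ j : Fin n, v j.succ = w j.succ := fun j => (hcomp j).1
    have hx00 : x 0 * v 0 = x 0 * w 0 := by
      have h1 := hinner v hv
      have h2 := hinner w hw
      rw [Finset.sum_congr rfl fun j _ => by rw [hvs j]] at h1
      rw [h1] at h2
      linarith
    have hxne : x ≠ 0 := by
      intro h0
      rw [h0, norm_zero] at hx
      linarith
    have hv0 : v 0 = w 0 := by
      by_contra hne
      apply hxne
      have hx0 : x 0 = 0 := by
        have h2 : x 0 * (v 0 - w 0) = 0 := by linear_combination hx00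
        rcases mul_eq_zero.mp h2 with h3 | h3
        · exact h3
        · exact absurd (sub_eq_zero.mp h3) hne
      have hxs : ∀ j : Fin n, x j.succ = 0 := by
        intro j
        have h2 : x j.succ * (v 0 - w 0) = 0 := by linear_combination (hcomp j).2
        rcases mul_eq_zero.mp h2 with h3 | h3
        · exact h3
        · exact absurd (sub_eq_zero.mp h3) hne
      ext i
      refine Fin.cases ?_ ?_ i
      · exact hx0
      · exact hxs
    ext i
    refine Fin.cases hv0 hvs i
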